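/- For every label sequence t ∈ {0,1}^{n+1+⌈log₂ m⌉}, the number of walks of G starting at root that realize t satisfies occ_root^G(t) ≤ m. -/

import Mathlib

namespace GraphDB

/-- Vertices of the graph `G` produced by the SAT reduction.
`node k p` is the vertex of the binary tree at depth `k` and position `p`
(in heap-style ordering); in particular `node 0 0` is the root and, with
`d = ⌈log₂ m⌉`, the leaf `node d (i-1)` is the clause vertex `c_i`.
`u i j` and `v i j` are the vertices `u_i^j` and `v_i^j` (with `i = 0`
giving `u_0^j`, `v_0^j`). -/
inductive Vtx : Type
  | node (k p : ℕ)
  | u (i j : ℕ)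
  | v (i j : ℕ)
  deriving DecidableEq

/-- The edge relation of the graph `G` obtained from the SAT instance with
`n` variables `x_1, …, x_n` and `m` clauses `c_1, …, c_m`, where
`c i j = some true` means that the literal `x_j` occurs in clause `c_i`,
`c i j = some false` means that the literal `¬x_j` occurs in `c_i`, and
`c i j = none` means that the variable `x_j` does not occur in `c_i`. -/
def Edge (n m : ℕ) (c : ℕ → ℕ → Option Bool) : Vtx → Vtx → Prop := fun a b =>
  match a, b with
  | .node k p, .node k' q =>
      k' = k + 1 ∧ k' ≤ Nat.clog 2 m ∧ (q = 2 * p ∨ q = 2 * p + 1) ∧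
        q * 2 ^ (Nat.clog 2 m - k') < m
  | .node k p, .u i j => k = Nat.clog 2 m ∧ p < m ∧ i = p + 1 ∧ j = 1
  | .node k p, .v i j => k = Nat.clog 2 m ∧ p < m ∧ i = p + 1 ∧ j = 1
  | .u i j, .u i' j' =>
      j' = j + 1 ∧
        ((i = 0 ∧ i' = 0 ∧ 2 ≤ j ∧ j + 1 ≤ n) ∨
         (1 ≤ i ∧ i ≤ m ∧ i' = 0 ∧ 1 ≤ j ∧ j + 1 ≤ n ∧
            (c i j = some true ∨ (j + 1 = n ∧ c i n = some true))) ∨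
         (1 ≤ i ∧ i ≤ m ∧ i' = i ∧ 1 ≤ j ∧ j + 2 ≤ n ∧ c i j ≠ some true))
  | .u i j, .v i' j' =>
      j' = j + 1 ∧
        ((i = 0 ∧ i' = 0 ∧ 2 ≤ j ∧ j + 1 ≤ n) ∨
         (1 ≤ i ∧ i ≤ m ∧ i' = 0 ∧ 1 ≤ j ∧ j + 1 ≤ n ∧
            (c i j = some true ∨ (j + 1 = n ∧ c i n = some false))) ∨
         (1 ≤ i ∧ i ≤ m ∧ i' = i ∧ 1 ≤ j ∧ j + 2 ≤ n ∧ c i j ≠ some true))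
  | .v i j, .u i' j' =>
      j' = j + 1 ∧
        ((i = 0 ∧ i' = 0 ∧ 2 ≤ j ∧ j + 1 ≤ n) ∨
         (1 ≤ i ∧ i ≤ m ∧ i' = 0 ∧ 1 ≤ j ∧ j + 1 ≤ n ∧
            (c i j = some false ∨ (j + 1 = n ∧ c i n = some true))) ∨
         (1 ≤ i ∧ i ≤ m ∧ i' = i ∧ 1 ≤ j ∧ j + 2 ≤ n ∧ c i j ≠ some false))
  | .v i j, .v i' j' =>
      j' = j + 1 ∧
        ((i = 0 ∧ i' = 0 ∧ 2 ≤ j ∧ j + 1 ≤ n) ∨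
         (1 ≤ i ∧ i ≤ m ∧ i' = 0 ∧ 1 ≤ j ∧ j + 1 ≤ n ∧
            (c i j = some false ∨ (j + 1 = n ∧ c i n = some false))) ∨
         (1 ≤ i ∧ i ≤ m ∧ i' = i ∧ 1 ≤ j ∧ j + 2 ≤ n ∧ c i j ≠ some false))
  | _, _ => False

/-- The vertex labeling `ℓ` of `G`: the vertices `v_i^j` are labeled `0`
(`false`), all other vertices are labeled `1` (`true`). -/
def lab : Vtx → Bool
  | .v _ _ => false
  | _ => true

/-- The starting vertex `root` of `G`. -/
def root : Vtx := .node 0 0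

/-- `occG n m c a t` is `occ_a^G(t)`: the number of walks `w_1 w_2 … w_k`
in `G` with `w_1 = a` and `ℓ(w_j) = t_j` for all `j ∈ {1, …, k}`. -/
noncomputable def occG (n m : ℕ) (c : ℕ → ℕ → Option Bool) (a : Vtx) (t : List Bool) : ℕ :=
  Set.ncard {w : List Vtx | List.Chain' (Edge n m c) w ∧ w.head? = some a ∧ w.map lab = t}

end GraphDB

namespace GraphDB

private lemma uniq_id {n m i j i₁ i₂ : ℕ} {A B₁ B₂ : Prop}
    (h₁ : (i = 0 ∧ i₁ = 0 ∧ 2 ≤ j ∧ j + 1 ≤ n) ∨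
      (1 ≤ i ∧ i ≤ m ∧ i₁ = 0 ∧ 1 ≤ j ∧ j + 1 ≤ n ∧ (A ∨ (j + 1 = n ∧ B₁))) ∨
      (1 ≤ i ∧ i ≤ m ∧ i₁ = i ∧ 1 ≤ j ∧ j + 2 ≤ n ∧ ¬A))
    (h₂ : (i = 0 ∧ i₂ = 0 ∧ 2 ≤ j ∧ j + 1 ≤ n) ∨
      (1 ≤ i ∧ i ≤ m ∧ i₂ = 0 ∧ 1 ≤ j ∧ j + 1 ≤ n ∧ (A ∨ (j + 1 = n ∧ B₂))) ∨
      (1 ≤ i ∧ i ≤ m ∧ i₂ = i ∧ 1 ≤ j ∧ j + 2 ≤ n ∧ ¬A)) :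
    i₁ = i₂ := by
  rcases h₁ with ⟨h,e1,-,-⟩|⟨h,-,e1,-,-,hA⟩|⟨h,-,e1,-,hj,hA⟩ <;>
  rcases h₂ with ⟨h',e2,-,-⟩|⟨h',-,e2,-,-,hA'⟩|⟨h',-,e2,-,hj',hA'⟩ <;>
    first
    | omega
    | (rcases hA with hA|⟨hn',-⟩; · exact absurd hA hA'
       omega)
    | (rcases hA' with hA'|⟨hn',-⟩; · exact absurd hA' hA
       omega)

private lemma det {n m : ℕ} {c : ℕ → ℕ → Option Bool} {a x y : Vtx}
    (ha : ∀ k p, a = .node k p → k = Nat.clog 2 m)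
    (hx : Edge n m c a x) (hy : Edge n m c a y) (hl : lab x = lab y) : x = y := by
  cases a with
  | node k p =>
    have hk := ha k p rfl
    cases x <;> cases y <;> simp only [Edge, lab] at hx hy hl <;>
      first
      | rfl
      | simp at hl
      | (exfalso; omega)
      | (obtain ⟨h1, h2, -⟩ := hx; omega)
      | (obtain ⟨h1, h2, -⟩ := hy; omega)
      | (obtain ⟨-, -, e1, f1⟩ := hx; obtain ⟨-, -, e2, f2⟩ := hy; simp [e1, e2, f1, f2])
  | u i j =>
    cases x <;> cases y <;> simp only [Edge, lab] at hx hy hl <;>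
      first
      | exact hx.elim
      | exact hy.elim
      | simp at hl
      | (obtain ⟨e1, d1⟩ := hx; obtain ⟨e2, d2⟩ := hy;
         simp only [Vtx.u.injEq, Vtx.v.injEq]
         exact ⟨uniq_id d1 d2, by omega⟩)
  | v i j =>
    cases x <;> cases y <;> simp only [Edge, lab] at hx hy hl <;>
      first
      | exact hx.elim
      | exact hy.elim
      | simp at hl
      | (obtain ⟨e1, d1⟩ := hx; obtain ⟨e2, d2⟩ := hy;
         simp only [Vtx.u.injEq, Vtx.v.injEq]
         exact ⟨uniq_id d1 d2, by omega⟩)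


private lemma walk_node {n m : ℕ} {c : ℕ → ℕ → Option Bool} (hm : 1 ≤ m) {w : List Vtx}
    (hw : List.Chain' (Edge n m c) w) (h0 : w.head? = some root) :
    ∀ k, k ≤ Nat.clog 2 m → ∀ (hk : k < w.length),
      ∃ p, p * 2 ^ (Nat.clog 2 m - k) < m ∧ w[k] = Vtx.node k p := by
  have hch : ∀ i, (h : i + 1 < w.length) → Edge n m c (w[i]'(by omega)) (w[i+1]'h) := by
    intro i h
    have := List.isChain_iff_getElem.mp hw i (by omega)
    simpa [List.get_eq_getElem] using this
  intro k
  induction k with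
  | zero =>
    intro _ hk
    refine ⟨0, by simp; omega, ?_⟩
    cases w with
    | nil => simp at hk
    | cons a l => simp_all [root]
  | succ k ih =>
    intro hkd hk
    obtain ⟨p, hp, hwp⟩ := ih (by omega) (by omega)
    have he := hch k (by omega)
    rw [hwp] at he
    cases hx : w[k+1] with
    | node k' q =>
      rw [hx] at he
      obtain ⟨h1, h2, h3, h4⟩ := he
      subst h1
      exact ⟨q, h4, rfl⟩
    | u i j => rw [hx] at he; exact absurd he.1 (by omega)
    | v i j => rw [hx] at he; exact absurd he.1 (by omega)

private lemma walk_uv {n m : ℕ} {c : ℕ → ℕ → Option Bool} (hm : 1 ≤ m) {w : List Vtx}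
    (hw : List.Chain' (Edge n m c) w) (h0 : w.head? = some root) :
    ∀ k, Nat.clog 2 m < k → ∀ (hk : k < w.length), ∀ k' p, w[k] ≠ Vtx.node k' p := by
  have hch : ∀ i, (h : i + 1 < w.length) → Edge n m c (w[i]'(by omega)) (w[i+1]'h) := by
    intro i h
    have := List.isChain_iff_getElem.mp hw i (by omega)
    simpa [List.get_eq_getElem] using this
  intro k
  induction k with
  | zero => intro h; omega
  | succ k ih =>
    intro hdk hk k' p hx
    have he := hch k (by omega)
    rw [hx] at he
    rcases Nat.lt_or_ge (Nat.clog 2 m) k with h | h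
    · cases hy : w[k] with
      | node a b => exact ih h (by omega) a b hy
      | u i j => rw [hy] at he; exact he
      | v i j => rw [hy] at he; exact he
    · have hkd : k = Nat.clog 2 m := by omega
      obtain ⟨p', hp', hwp⟩ := walk_node hm hw h0 k (by omega) (by omega)
      rw [hwp] at he
      obtain ⟨h1, h2, -⟩ := he
      omega

private lemma walk_eq {n m : ℕ} {c : ℕ → ℕ → Option Bool} (hm : 1 ≤ m) {w w' : List Vtx}
    (hw : List.Chain' (Edge n m c) w) (hw' : List.Chain' (Edge n m c) w')
    (h0 : w.head? = some root) (h0' : w'.head? = some root)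
    (hlab : w.map lab = w'.map lab)
    (hd : Nat.clog 2 m < w.length)
    (heq : w[Nat.clog 2 m]? = w'[Nat.clog 2 m]?) : w = w' := by
  have hlen : w.length = w'.length := by
    have := congrArg List.length hlab; simpa using this
  have hch : ∀ i, (h : i + 1 < w.length) → Edge n m c (w[i]'(by omega)) (w[i+1]'h) := by
    intro i h
    have := List.isChain_iff_getElem.mp hw i (by omega)
    simpa [List.get_eq_getElem] using this
  have hch' : ∀ i, (h : i + 1 < w'.length) → Edge n m c (w'[i]'(by omega)) (w'[i+1]'h) := by
    intro i h
    have := List.isChain_iff_getElem.mp hw' i (by omega)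
    simpa [List.get_eq_getElem] using this
  have hl : ∀ k, (h : k < w.length) → lab (w[k]'h) = lab (w'[k]'(by omega)) := by
    intro k h
    have := congrArg (fun l => l[k]?) hlab
    simp only [List.getElem?_map, List.getElem?_eq_getElem h,
      List.getElem?_eq_getElem (show k < w'.length by omega), Option.map_some] at this
    exact Option.some.inj this
  have step : ∀ k, k + 1 ≤ Nat.clog 2 m → k + 1 < w.length →
      w[k+1]? = w'[k+1]? → w[k]? = w'[k]? := by
    intro k hk hkl hkk
    obtain ⟨p, -, e1⟩ := walk_node hm hw h0 k (by omega) (by omega)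
    obtain ⟨p', -, e1'⟩ := walk_node hm hw' h0' k (by omega) (by omega)
    obtain ⟨q, -, e2⟩ := walk_node hm hw h0 (k+1) hk (by omega)
    obtain ⟨q', -, e2'⟩ := walk_node hm hw' h0' (k+1) hk (by omega)
    have hqq : q = q' := by
      rw [List.getElem?_eq_getElem (by omega), List.getElem?_eq_getElem (by omega),
        e2, e2'] at hkk
      simpa using hkk
    have hE := hch k (by omega); rw [e1, e2] at hE
    have hE' := hch' k (by omega); rw [e1', e2'] at hE'
    obtain ⟨-, -, h3, -⟩ := hE
    obtain ⟨-, -, h3', -⟩ := hE'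
    have hpp : p = p' := by omega
    rw [List.getElem?_eq_getElem (by omega), List.getElem?_eq_getElem (by omega), e1, e1', hpp]
  have key : ∀ j, j ≤ Nat.clog 2 m →
      w[Nat.clog 2 m - j]? = w'[Nat.clog 2 m - j]? := by
    intro j
    induction j with
    | zero => intro _; simpa using heq
    | succ j ih =>
      intro hj
      have h1 : Nat.clog 2 m - (j + 1) + 1 = Nat.clog 2 m - j := by omega
      have := ih (by omega)
      rw [← h1] at this
      exact step _ (by omega) (by omega) this
  have up : ∀ k, Nat.clog 2 m ≤ k → k < w.length → w[k]? = w'[k]? := by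
    intro k hk
    induction k, hk using Nat.le_induction with
    | base => intro _; simpa using key 0 (by omega)
    | succ k hk ih =>
      intro hkl
      have hprev := ih (by omega)
      have hsame : w[k]'(by omega) = w'[k]'(by omega) := by
        rw [List.getElem?_eq_getElem (by omega), List.getElem?_eq_getElem (by omega)] at hprev
        exact Option.some.inj hprev
      have ha : ∀ k' p, w[k]'(by omega) = Vtx.node k' p → k' = Nat.clog 2 m := by
        intro k' p hx
        rcases Nat.lt_or_ge (Nat.clog 2 m) k with h | h
        · exact absurd hx (walk_uv hm hw h0 k h (by omega) k' p)
        · obtain ⟨pp, -, e⟩ := walk_node hm hw h0 k (by omega) (by omega)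
          rw [e] at hx
          injection hx with hx1 hx2
          omega
      have hEw := hch k (by omega)
      have hEw' := hch' k (by omega)
      rw [← hsame] at hEw'
      have := det ha hEw hEw' (hl (k+1) (by omega))
      rw [List.getElem?_eq_getElem (by omega), List.getElem?_eq_getElem (by omega), this]
  refine List.ext_getElem hlen ?_
  intro i h1 h2
  rcases le_or_gt i (Nat.clog 2 m) with h | h
  · have := key (Nat.clog 2 m - i) (by omega)
    rw [show Nat.clog 2 m - (Nat.clog 2 m - i) = i by omega] at this
    rw [List.getElem?_eq_getElem h1, List.getElem?_eq_getElem h2] at this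
    exact Option.some.inj this
  · have := up i (by omega) h1
    rw [List.getElem?_eq_getElem h1, List.getElem?_eq_getElem h2] at this
    exact Option.some.inj this

/-- for every label sequence `t ∈ {0,1}^{n+1+⌈log₂ m⌉}`, the
number of walks of `G` starting at `root` realizing `t` satisfies
`occ_root^G(t) ≤ m`. -/
theorem occ_le_m (n m : ℕ) (hn : 2 ≤ n) (hm : 1 ≤ m)
    (c : ℕ → ℕ → Option Bool)
    (hne : ∀ i, 1 ≤ i → i ≤ m → ∃ j, 1 ≤ j ∧ j ≤ n ∧ c i j ≠ none) :
    ∀ t : List Bool, t.length = n + 1 + Nat.clog 2 m → occG n m c root t ≤ m := by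
  intro t ht
  rw [occG]
  classical
  set S := {w : List Vtx | List.Chain' (Edge n m c) w ∧ w.head? = some root ∧ w.map lab = t}
    with hS
  have hlen : ∀ w ∈ S, w.length = n + 1 + Nat.clog 2 m := by
    rintro w ⟨-, -, hw⟩
    have := congrArg List.length hw
    simpa [ht] using this
  set f : List Vtx → ℕ := fun w => match w[Nat.clog 2 m]? with
    | some (Vtx.node _ p) => p
    | _ => 0 with hf
  have hfw : ∀ w ∈ S, ∃ p, p < m ∧ w[Nat.clog 2 m]? = some (Vtx.node (Nat.clog 2 m) p)
      ∧ f w = p := by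
    intro w hwS
    obtain ⟨hw1, hw2, hw3⟩ := hwS
    have hwl : Nat.clog 2 m < w.length := by
      rw [hlen w ⟨hw1, hw2, hw3⟩]; omega
    obtain ⟨p, hp, e⟩ := walk_node hm hw1 hw2 (Nat.clog 2 m) le_rfl hwl
    have e2 : w[Nat.clog 2 m]? = some (Vtx.node (Nat.clog 2 m) p) := by
      rw [List.getElem?_eq_getElem hwl, e]
    refine ⟨p, by simpa using hp, e2, ?_⟩
    simp only [hf]
    rw [e2]
  have hinj : Set.InjOn f S := by
    intro w hwS w' hwS' hff
    obtain ⟨p, hp, e, efw⟩ := hfw w hwS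
    obtain ⟨p', hp', e', efw'⟩ := hfw w' hwS'
    obtain ⟨hw1, hw2, hw3⟩ := hwS
    obtain ⟨hw1', hw2', hw3'⟩ := hwS'
    have hpp : p = p' := by rw [← efw, ← efw', hff]
    refine walk_eq hm hw1 hw1' hw2 hw2' (hw3.trans hw3'.symm) ?_ (by rw [e, e', hpp])
    rw [hlen w ⟨hw1, hw2, hw3⟩]; omega
  have hsub : f '' S ⊆ Set.Iio m := by
    rintro x ⟨w, hwS, rfl⟩
    obtain ⟨p, hp, -, efw⟩ := hfw w hwS
    simpa [efw] using hp
  calc S.ncard = (f '' S).ncard := (Set.ncard_image_of_injOn hinj).symm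
    _ ≤ (Set.Iio m).ncard := Set.ncard_le_ncard hsub (Set.finite_Iio m)
    _ = m := by rw [← Finset.coe_range, Set.ncard_coe_finset, Finset.card_range]



end GraphDB
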